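/- arXiv:1707.01888 — 2 statements merged into one kernel-verified Lean document; each statement's English description precedes it below -/
import Mathlib

section
/- For any state x in the informed set defined by start x_start, goal x_goal, and cost bound c (with Euclidean heuristic), x lies in the prolate hyperspheroid with foci x_start, x_goal, transverse diameter c; hence the Lebesgue measure of the informed set is at most c(c² − c_min²)^((n−1)/2) ζ_n / 2^n, where c_min = ‖x_goal − x_start‖. -/
open MeasureTheory
open scoped RealInnerProductSpace Pointwise

private lemma informed_key_ineq {c cmin t W p q : ℝ} (hcmin : 0 < cmin) (hc : cmin < c)
    (hp : 0 ≤ p) (hq : 0 ≤ q) (hpq : p + q ≤ c)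
    (hd : |p - q| ≤ cmin)
    (hp2 : p^2 = t^2 + W + cmin*t + cmin^2/4)
    (hq2 : q^2 = t^2 + W - cmin*t + cmin^2/4) :
    4*t^2*(c^2 - cmin^2) + 4*W*c^2 ≤ c^2*(c^2 - cmin^2) := by
  have hds : (p - q) * (p + q) = 2*cmin*t := by nlinarith [hp2, hq2]
  have hds2 : ((p-q)*(p+q))^2 = (2*cmin*t)^2 := by rw [hds]
  have hsd : c^2*((p+q)^2 + (p-q)^2) = c^2*(4*t^2+4*W+cmin^2) := by nlinarith [hp2, hq2]
  have hd2 : (p-q)^2 ≤ cmin^2 := by nlinarith [abs_le.mp hd]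
  have h1 : 0 ≤ c^2 - (p+q)^2 := by nlinarith
  have h2 : 0 ≤ c^2 - (p-q)^2 := by nlinarith
  nlinarith [mul_nonneg h1 h2, hds2, hsd]

private lemma informed_exists_map (k : ℕ) (v : EuclideanSpace ℝ (Fin (k+1)))
    (hv1 : ⟪v, v⟫ = 1) (α β : ℝ) :
    ∃ T : EuclideanSpace ℝ (Fin (k+1)) →ₗ[ℝ] EuclideanSpace ℝ (Fin (k+1)),
      (∀ y, T y = β • y + ((α - β) * ⟪v, y⟫) • v) ∧ LinearMap.det T = α * β ^ k := by
  have hv : ‖v‖ = 1 := by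
    have := real_inner_self_eq_norm_sq v
    nlinarith [norm_nonneg v]
  obtain ⟨B, hB⟩ := Orthonormal.exists_orthonormalBasis_extension_of_card_eq
    (𝕜 := ℝ) (by simp) (v := fun _ : Fin (k+1) => v) (s := {0})
    (by
      constructor
      · intro i; simpa using hv
      · intro i j hij; exact absurd (Subsingleton.elim i j) hij)
  have hB0 : B 0 = v := hB 0 rfl
  refine ⟨β • LinearMap.id + (α - β) • LinearMap.smulRight (innerₛₗ ℝ v) v, fun y => by
    simp [LinearMap.smulRight, smul_smul], ?_⟩
  set T := β • (LinearMap.id : EuclideanSpace ℝ (Fin (k+1)) →ₗ[ℝ] _) + (α - β) • LinearMap.smulRight (innerₛₗ ℝ v) v with hTdef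
  have hite := orthonormal_iff_ite.mp B.orthonormal
  have hmat : LinearMap.toMatrix B.toBasis B.toBasis T =
      Matrix.diagonal (fun i => if i = (0 : Fin (k+1)) then α else β) := by
    ext i j
    rw [LinearMap.toMatrix_apply, B.coe_toBasis_repr_apply, B.repr_apply_apply]
    have : T (B.toBasis j) = β • B j + ((α - β) * ⟪v, B j⟫) • v := by
      simp [hTdef, LinearMap.smulRight, smul_smul, OrthonormalBasis.coe_toBasis]
    rw [this, inner_add_right, real_inner_smul_right, real_inner_smul_right, ← hB0]
    rw [hite i j, hite 0 j, real_inner_comm, hite 0 i]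
    rcases eq_or_ne i j with rfl | hij
    · rcases eq_or_ne i 0 with rfl | hi0
      · rw [Matrix.diagonal_apply_eq]; simp
      · rw [if_pos rfl, if_neg (Ne.symm hi0), Matrix.diagonal_apply_eq, if_neg hi0]; ring
    · rw [if_neg hij, Matrix.diagonal_apply_ne _ hij]
      rcases eq_or_ne j 0 with rfl | hj0
      · rw [if_neg (fun h : (0 : Fin (k+1)) = i => hij h.symm)]; ring
      · rw [if_neg (Ne.symm hj0)]; ring
  have hd : LinearMap.det T = Matrix.det (LinearMap.toMatrix B.toBasis B.toBasis T) :=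
    (LinearMap.det_toMatrix _ _).symm
  rw [hd, hmat, Matrix.det_diagonal, Fin.prod_univ_succ]
  simp [Fin.succ_ne_zero]

set_option maxHeartbeats 1000000 in
/-- Any state in the informed set lies in the prolate hyperspheroid with foci
`xstart`, `xgoal` and transverse diameter `c`; hence the measure of the informed set
is at most `c (c² − cmin²)^((n−1)/2) ζₙ / 2ⁿ` with `cmin = ‖xgoal − xstart‖`. -/
theorem informed_set_measure_bound (n : ℕ) (xstart xgoal : EuclideanSpace ℝ (Fin n))
    (c : ℝ) :
    (∀ x : EuclideanSpace ℝ (Fin n), ‖x - xstart‖ + ‖xgoal - x‖ < c →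
      x ∈ {y : EuclideanSpace ℝ (Fin n) | ‖y - xstart‖ + ‖y - xgoal‖ ≤ c}) ∧
    volume {x : EuclideanSpace ℝ (Fin n) | ‖x - xstart‖ + ‖xgoal - x‖ < c}
      ≤ ENNReal.ofReal
          (c * (c ^ 2 - ‖xgoal - xstart‖ ^ 2) ^ (((n : ℝ) - 1) / 2) / 2 ^ n) *
        volume (Metric.closedBall (0 : EuclideanSpace ℝ (Fin n)) 1) := by
  constructor
  · intro x hx
    have h1 : ‖xgoal - x‖ = ‖x - xgoal‖ := norm_sub_rev _ _
    simp only [Set.mem_setOf_eq]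
    rw [← h1]
    exact hx.le
  rcases le_or_gt c ‖xgoal - xstart‖ with hcle | hclt
  · -- the informed set is empty
    have hempty : {x : EuclideanSpace ℝ (Fin n) | ‖x - xstart‖ + ‖xgoal - x‖ < c} = ∅ := by
      ext x
      simp only [Set.mem_setOf_eq, Set.mem_empty_iff_false, iff_false, not_lt]
      have h2 : xgoal - xstart = (xgoal - x) + (x - xstart) := by abel
      have h3 := norm_add_le (xgoal - x) (x - xstart)
      rw [← h2] at h3
      linarith
    rw [hempty]
    simp
  rcases (norm_nonneg (xgoal - xstart)).eq_or_lt with h0 | hcmin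
  · -- degenerate case : xgoal = xstart
    have hc0 : 0 < c := lt_of_le_of_lt (norm_nonneg _) hclt
    have hba : xgoal = xstart := by
      rw [← sub_eq_zero]
      exact norm_eq_zero.mp h0.symm
    have hsub : {x : EuclideanSpace ℝ (Fin n) | ‖x - xstart‖ + ‖xgoal - x‖ < c}
        ⊆ Metric.closedBall xstart (c/2) := by
      intro x hx
      simp only [Set.mem_setOf_eq, hba] at hx
      have h1 : ‖xstart - x‖ = ‖x - xstart‖ := norm_sub_rev _ _
      rw [Metric.mem_closedBall, dist_eq_norm]
      linarith
    calc volume {x : EuclideanSpace ℝ (Fin n) | ‖x - xstart‖ + ‖xgoal - x‖ < c}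
        ≤ volume (Metric.closedBall xstart (c/2)) := measure_mono hsub
      _ = ENNReal.ofReal ((c/2) ^ Module.finrank ℝ (EuclideanSpace ℝ (Fin n))) *
          volume (Metric.closedBall (0 : EuclideanSpace ℝ (Fin n)) 1) :=
        Measure.addHaar_closedBall' _ _ (by positivity)
      _ = _ := by
        rw [finrank_euclideanSpace_fin, ← h0]
        congr 1
        have h2 : ((c:ℝ)^2 - 0^2) ^ (((n:ℝ)-1)/2) = c ^ ((n:ℝ)-1) := by
          rw [show (c:ℝ)^2 - 0^2 = c^2 by ring, ← Real.rpow_natCast c 2,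
            ← Real.rpow_mul hc0.le]
          congr 1
          push_cast
          ring
        rw [h2, show c * c ^ ((n:ℝ)-1) = c ^ (1 + ((n:ℝ)-1)) from by
          rw [Real.rpow_add hc0, Real.rpow_one]]
        rw [show (1 + ((n:ℝ)-1)) = ((n:ℕ):ℝ) by push_cast; ring, Real.rpow_natCast, div_pow]
  · -- main case : 0 < cmin < c
    obtain ⟨cmin, hcmin_def⟩ : ∃ z : ℝ, z = ‖xgoal - xstart‖ := ⟨_, rfl⟩
    rw [← hcmin_def] at hclt hcmin ⊢
    -- dimension is positive
    have hn : 0 < n := by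
      rcases Nat.eq_zero_or_pos n with rfl | h
      · exfalso
        have hz : xgoal - xstart = 0 := Subsingleton.elim _ _
        rw [hcmin_def, hz, norm_zero] at hcmin
        exact lt_irrefl 0 hcmin
      · exact h
    obtain ⟨k, rfl⟩ : ∃ k, n = k + 1 := ⟨n - 1, (Nat.succ_pred_eq_of_pos hn).symm⟩
    have hc0 : 0 < c := lt_trans hcmin hclt
    have hD : 0 < c^2 - cmin^2 := by nlinarith
    obtain ⟨v, hv_def⟩ : ∃ z : EuclideanSpace ℝ (Fin (k+1)), z = cmin⁻¹ • (xgoal - xstart) :=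
      ⟨_, rfl⟩
    have hvnorm : ‖v‖ = 1 := by
      rw [hv_def, norm_smul, Real.norm_eq_abs, abs_of_pos (inv_pos.mpr hcmin),
        ← hcmin_def]
      field_simp
    have hvv : ⟪v, v⟫ = 1 := by
      rw [real_inner_self_eq_norm_sq, hvnorm]; norm_num
    obtain ⟨α, hα_def⟩ : ∃ z : ℝ, z = c / 2 := ⟨_, rfl⟩
    obtain ⟨β, hβ_def⟩ : ∃ z : ℝ, z = Real.sqrt (c^2 - cmin^2) / 2 := ⟨_, rfl⟩
    have hβ : 0 < β := by rw [hβ_def]; positivity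
    have hβ2 : β^2 = (c^2 - cmin^2)/4 := by
      rw [hβ_def, div_pow, Real.sq_sqrt hD.le]
      norm_num
    have hα : 0 < α := by rw [hα_def]; positivity
    obtain ⟨T, hT, hdet⟩ := informed_exists_map k v hvv α β
    obtain ⟨m, hm_def⟩ : ∃ z : EuclideanSpace ℝ (Fin (k+1)), z = (2:ℝ)⁻¹ • (xstart + xgoal) :=
      ⟨_, rfl⟩
    obtain ⟨f, hf_def⟩ : ∃ z : EuclideanSpace ℝ (Fin (k+1)), z = (2:ℝ)⁻¹ • (xgoal - xstart) :=
      ⟨_, rfl⟩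
    have hfv : f = (cmin/2) • v := by
      rw [hf_def, hv_def, smul_smul]
      congr 1
      field_simp
    have hfnorm2 : ‖f‖^2 = cmin^2/4 := by
      rw [hfv, norm_smul, Real.norm_eq_abs, hvnorm, mul_one, sq_abs]
      ring
    -- the inclusion into the hyperspheroid image
    have hsub : {x : EuclideanSpace ℝ (Fin (k+1)) | ‖x - xstart‖ + ‖xgoal - x‖ < c}
        ⊆ (fun z => m + T z) '' Metric.closedBall 0 1 := by
      intro x hx
      simp only [Set.mem_setOf_eq] at hx
      obtain ⟨y, hy_def⟩ : ∃ z : EuclideanSpace ℝ (Fin (k+1)), z = x - m := ⟨_, rfl⟩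
      obtain ⟨t, ht_def⟩ : ∃ z : ℝ, z = ⟪v, y⟫ := ⟨_, rfl⟩
      obtain ⟨w, hw_def⟩ : ∃ z : EuclideanSpace ℝ (Fin (k+1)), z = y - t • v := ⟨_, rfl⟩
      have hvw : ⟪v, w⟫ = 0 := by
        rw [hw_def, inner_sub_right, real_inner_smul_right, hvv, ht_def]
        ring
      have hyd : y = t • v + w := by rw [hw_def]; abel
      obtain ⟨W, hW_def⟩ : ∃ z : ℝ, z = ‖w‖^2 := ⟨_, rfl⟩
      have hW0 : 0 ≤ W := hW_def ▸ sq_nonneg _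
      have htv : ‖t • v‖^2 = t^2 := by
        rw [norm_smul, Real.norm_eq_abs, hvnorm, mul_one, sq_abs]
      have htvw : ⟪t • v, w⟫ = 0 := by
        rw [real_inner_smul_left, hvw]; ring
      have hy2 : ‖y‖^2 = t^2 + W := by
        rw [hyd, norm_add_sq_real, htv, htvw, hW_def]; ring
      have hyf : ⟪y, f⟫ = (cmin/2) * t := by
        rw [hfv, real_inner_smul_right, real_inner_comm, ← ht_def]
      have hxa : x - xstart = y + f := by rw [hy_def, hm_def, hf_def]; module
      have hbx : xgoal - x = f - y := by rw [hy_def, hm_def, hf_def]; module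
      have hpq : ‖y + f‖ + ‖y - f‖ < c := by
        rw [← hxa, ← norm_sub_rev f y, ← hbx]
        exact hx
      have hp2 : ‖y + f‖^2 = t^2 + W + cmin*t + cmin^2/4 := by
        rw [norm_add_sq_real, hy2, hyf, hfnorm2]; ring
      have hq2 : ‖y - f‖^2 = t^2 + W - cmin*t + cmin^2/4 := by
        rw [norm_sub_sq_real, hy2, hyf, hfnorm2]; ring
      have hdle : |‖y + f‖ - ‖y - f‖| ≤ cmin := by
        have h1 := abs_norm_sub_norm_le (y + f) (y - f)
        have h2 : (y + f) - (y - f) = xgoal - xstart := by rw [hf_def]; module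
        rw [h2, ← hcmin_def] at h1
        exact h1
      have key := informed_key_ineq hcmin hclt (norm_nonneg _) (norm_nonneg _)
        hpq.le hdle hp2 hq2
      -- the preimage point
      obtain ⟨u, hu_def⟩ : ∃ z : EuclideanSpace ℝ (Fin (k+1)), z = (t/α) • v + β⁻¹ • w :=
        ⟨_, rfl⟩
      have hvu : ⟪v, u⟫ = t/α := by
        rw [hu_def, inner_add_right, real_inner_smul_right, real_inner_smul_right,
          hvv, hvw]
        ring
      have hTu : T u = y := by
        rw [hT u, hvu, hu_def, hyd]
        match_scalars <;> field_simp <;> try ring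
      have hu2 : ‖u‖^2 ≤ 1 := by
        have hcross : ⟪(t/α) • v, β⁻¹ • w⟫ = 0 := by
          rw [real_inner_smul_left, real_inner_smul_right, hvw]; ring
        have htva : ‖(t/α) • v‖^2 = (t/α)^2 := by
          rw [norm_smul, Real.norm_eq_abs, hvnorm, mul_one, sq_abs]
        have hbw : ‖β⁻¹ • w‖^2 = β⁻¹^2 * W := by
          rw [norm_smul, Real.norm_eq_abs, mul_pow, sq_abs, hW_def]
        have hnu : ‖u‖^2 = (t/α)^2 + β⁻¹^2 * W := by
          rw [hu_def, norm_add_sq_real, hcross, htva, hbw]; ring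
        have hα2 : (t/α)^2 = 4*t^2/c^2 := by
          rw [hα_def]
          field_simp
          ring
        have hβi : β⁻¹^2 = 4/(c^2 - cmin^2) := by
          rw [← one_div, div_pow, one_pow, hβ2]
          field_simp
        rw [hnu, hα2, hβi, div_mul_eq_mul_div,
          div_add_div _ _ (by positivity) (by positivity), div_le_one (by positivity)]
        linarith [key]
      have humem : u ∈ Metric.closedBall (0 : EuclideanSpace ℝ (Fin (k+1))) 1 := by
        rw [Metric.mem_closedBall, dist_zero_right]
        exact (pow_le_one_iff_of_nonneg (norm_nonneg u) two_ne_zero).mp hu2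
      refine ⟨u, humem, ?_⟩
      show m + T u = x
      rw [hTu, hy_def]
      abel
    -- measure computation
    have himg : (fun z => m + T z) '' Metric.closedBall 0 1
        = m +ᵥ (⇑T '' Metric.closedBall 0 1) := by
      rw [← Set.image_vadd, ← Set.image_comp]
      rfl
    calc volume {x : EuclideanSpace ℝ (Fin (k+1)) | ‖x - xstart‖ + ‖xgoal - x‖ < c}
        ≤ volume ((fun z => m + T z) '' Metric.closedBall 0 1) := measure_mono hsub
      _ = volume (⇑T '' Metric.closedBall 0 1) := by
          rw [himg]
          exact measure_vadd _ _ _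
      _ = ENNReal.ofReal |LinearMap.det T| * volume (Metric.closedBall 0 1) :=
          Measure.addHaar_image_linearMap _ _ _
      _ = _ := by
        congr 1
        rw [hdet, abs_of_pos (by positivity)]
        congr 1
        have hsq : Real.sqrt (c^2 - cmin^2) ^ k = (c^2 - cmin^2) ^ ((k:ℝ)/2) := by
          rw [Real.sqrt_eq_rpow, ← Real.rpow_natCast ((c^2 - cmin^2) ^ ((1:ℝ)/2)) k,
            ← Real.rpow_mul hD.le]
          congr 1
          ring
        have hexp : (((k+1:ℕ):ℝ) - 1)/2 = (k:ℝ)/2 := by push_cast; ring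
        rw [hexp, hα_def, hβ_def, div_pow, hsq, pow_succ]
        ring
end

section
/- Suppose edges into a vertex v are examined in non-decreasing order of estimated cost ĝT(u) + ĉ(u,v), with ĉ(u,v) ≤ c(u,v) for all u. If at some point the current running minimum M over true costs ĝT(u) + c(u,v) of edges examined so far satisfies M ≤ ĝT(u') + ĉ(u',v) for the next edge (u',v), then M equals the global minimum over all edges of ĝT(u) + c(u,v). -/
open scoped ENNReal

/-- Early-termination correctness: if edges into `v` are examined in non-decreasing
order of estimated cost and the running minimum `M` of the true costs examined so far
satisfies `M ≤ ĝT(u') + ĉ(u',v)` for the next edge, then `M` is the global minimum of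
the true costs over all edges into `v`. -/
theorem running_min_early_termination {V : Type*} (q : ℕ) (u : Fin q → V)
    (gT : V → ℝ≥0∞) (chat ctrue : V → V → ℝ≥0∞) (v : V)
    (hadm : ∀ a, chat a v ≤ ctrue a v)
    (hsorted : Monotone fun i => gT (u i) + chat (u i) v)
    (t : Fin q) (ht : 0 < (t : ℕ))
    (hstop : (⨅ i : {i : Fin q // i < t}, gT (u i) + ctrue (u i) v)
      ≤ gT (u t) + chat (u t) v) :
    (⨅ i : {i : Fin q // i < t}, gT (u i) + ctrue (u i) v)
      = ⨅ i : Fin q, gT (u i) + ctrue (u i) v := by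
  apply le_antisymm
  · apply le_iInf
    intro i
    rcases lt_or_ge i t with h | h
    · exact iInf_le (fun j : {j : Fin q // j < t} => gT (u j) + ctrue (u j) v) ⟨i, h⟩
    · exact hstop.trans ((hsorted h).trans (add_le_add_right (hadm (u i)) _))
  · exact le_iInf fun i => iInf_le _ i.1
end
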